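/- Let H be a Hermitian operator on a finite-dimensional Hilbert space, and let P, W, Φ be orthogonal projectors with P = W + Φ, WΦ = 0, and (I−P) H W = 0. If |ψ⟩ is a unit vector with P|ψ⟩ = |ψ⟩ and P H P |ψ⟩ = E |ψ⟩, then ‖(H−E)|ψ⟩‖ ≤ ‖H‖ · ‖Φ|ψ⟩‖. -/

import Mathlib

lemma proj_apply_norm_le {d : ℕ}
    (Q : EuclideanSpace ℂ (Fin d) →L[ℂ] EuclideanSpace ℂ (Fin d))
    (hsa : IsSelfAdjoint Q) (hid : Q ∘L Q = Q) (x : EuclideanSpace ℂ (Fin d)) :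
    ‖Q x‖ ≤ ‖x‖ := by
  have hadj : ContinuousLinearMap.adjoint Q = Q := hsa
  have h1 : (inner ℂ (Q x) (Q x) : ℂ) = inner ℂ x (Q x) := by
    rw [← ContinuousLinearMap.adjoint_inner_right Q, hadj]
    have : Q (Q x) = Q x := by
      have := congrArg (fun T => T x) hid
      simpa using this
    rw [this]
  have h2 : ‖Q x‖ ^ 2 ≤ ‖x‖ * ‖Q x‖ := by
    have := inner_self_eq_norm_sq (𝕜 := ℂ) (Q x)
    calc ‖Q x‖ ^ 2 = RCLike.re (inner ℂ (Q x) (Q x) : ℂ) := this.symm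
      _ = RCLike.re (inner ℂ x (Q x) : ℂ) := by rw [h1]
      _ ≤ ‖(inner ℂ x (Q x) : ℂ)‖ := RCLike.re_le_norm _
      _ ≤ ‖x‖ * ‖Q x‖ := norm_inner_le_norm _ _
  rcases eq_or_lt_of_le (norm_nonneg (Q x)) with h0 | h0
  · rw [← h0]; exact norm_nonneg x
  · nlinarith

/-- A state supported in a well-plus-bottleneck subspace that is an eigenstate of the
restricted Hamiltonian is an almost eigenstate of the full Hamiltonian, with error
controlled by its weight in the bottleneck. -/
theorem restricted_eigenstate_almost_eigenstate {d : ℕ}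
    (H P W Φ : EuclideanSpace ℂ (Fin d) →L[ℂ] EuclideanSpace ℂ (Fin d))
    (hH : IsSelfAdjoint H)
    (hPsa : IsSelfAdjoint P) (hPidem : P ∘L P = P)
    (hWsa : IsSelfAdjoint W) (hWidem : W ∘L W = W)
    (hΦsa : IsSelfAdjoint Φ) (hΦidem : Φ ∘L Φ = Φ)
    (hPWΦ : P = W + Φ) (hWΦ : W ∘L Φ = 0)
    (hnobypass : (1 - P) ∘L H ∘L W = 0)
    (E : ℝ) (ψ : EuclideanSpace ℂ (Fin d)) (hψ : ‖ψ‖ = 1)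
    (hPψ : P ψ = ψ) (heig : (P ∘L H ∘L P) ψ = (E : ℂ) • ψ) :
    ‖H ψ - (E : ℂ) • ψ‖ ≤ ‖H‖ * ‖Φ ψ‖ := by
  have hPHψ : P (H ψ) = (E : ℂ) • ψ := by
    have : P (H (P ψ)) = (E : ℂ) • ψ := heig
    rwa [hPψ] at this
  have hWψ : (1 - P) (H (W ψ)) = 0 := by
    have := congrArg (fun T => T ψ) hnobypass
    simpa using this
  have hdecomp : H ψ - (E : ℂ) • ψ = (1 - P) (H (Φ ψ)) := by
    have hψsplit : ψ = W ψ + Φ ψ := by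
      nth_rewrite 1 [← hPψ]
      rw [hPWΦ]; simp
    calc H ψ - (E : ℂ) • ψ = H ψ - P (H ψ) := by rw [hPHψ]
      _ = (1 - P) (H ψ) := by simp [ContinuousLinearMap.sub_apply]
      _ = (1 - P) (H (W ψ + Φ ψ)) := by rw [← hψsplit]
      _ = (1 - P) (H (W ψ)) + (1 - P) (H (Φ ψ)) := by rw [map_add, map_add]
      _ = (1 - P) (H (Φ ψ)) := by rw [hWψ, zero_add]
  rw [hdecomp]
  have h1P_sa : IsSelfAdjoint (1 - P : EuclideanSpace ℂ (Fin d) →L[ℂ] EuclideanSpace ℂ (Fin d)) :=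
  by
    rw [ContinuousLinearMap.isSelfAdjoint_iff', map_sub, hPsa.adjoint_eq]
    congr 1
    rw [ContinuousLinearMap.one_def, ContinuousLinearMap.adjoint_id]
  have hPP : ∀ x, P (P x) = P x := fun x => by
    have := congrArg (fun T => T x) hPidem; simpa using this
  have h1P_idem : (1 - P) ∘L (1 - P) = (1 - P) := by
    ext x
    simp [ContinuousLinearMap.sub_apply, map_sub, hPP]
  calc ‖(1 - P) (H (Φ ψ))‖ ≤ ‖H (Φ ψ)‖ := proj_apply_norm_le _ h1P_sa h1P_idem _
    _ ≤ ‖H‖ * ‖Φ ψ‖ := H.le_opNorm _
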